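/- arXiv:1211.4881 — 3 statements merged into one kernel-verified Lean document; each statement's English description precedes it below -/
import Mathlib

section
/- Under the same setup (v in pi_d(n,k), W_{m,l}(v) as defined, alpha affine of degree at most one, with alpha(0,0) nonzero), for any complex tau: the double sum over l=0..k and m=l..n of [alpha(0,0)/alpha(l,m)] * C(tau - alpha(l,m), k-l) * C(alpha(l,m), l) / C(k,l) * W_{m,l}(v) equals C(tau,k). -/
open Finset

noncomputable def gchoose (x : ℂ) (j : ℕ) : ℂ :=
  (∏ i ∈ Finset.range j, (x - (i : ℂ))) / (j.factorial : ℂ)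

/-- The set of tuples `i : Fin d → ℕ` with `∑ i_j = k` and `∑ j * i_j = n`
(indices weighted by `j+1`). -/
def parts (d n k : ℕ) : Finset (Fin d → ℕ) :=
  (Fintype.piFinset fun _ : Fin d => Finset.range (n + 1)).filter
    fun i => (∑ j, i j) = k ∧ (∑ j : Fin d, ((j : ℕ) + 1) * i j) = n

/-- `W d m l v = ∑_{i ∈ π_d(m,l)} ∏_r C(v_r, i_r)`. -/
def W (d m l : ℕ) (v : Fin d → ℕ) : ℕ :=
  ∑ i ∈ parts d m l, ∏ r, (v r).choose (i r)

/-! ### Falling factorials -/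

noncomputable def ff (x : ℂ) (m : ℕ) : ℂ := ∏ i ∈ Finset.range m, (x - (i : ℂ))

lemma ff_zero (x : ℂ) : ff x 0 = 1 := by simp [ff]

lemma ff_succ (x : ℂ) (m : ℕ) : ff x (m + 1) = ff x m * (x - m) := by
  rw [ff, ff, Finset.prod_range_succ]

lemma ff_shift (x : ℂ) (m : ℕ) : ff x (m + 1) = x * ff (x - 1) m := by
  induction m with
  | zero => simp [ff_succ, ff_zero]
  | succ m ih =>
      rw [ff_succ, ih, ff_succ]
      push_cast
      ring

lemma gchoose_eq (x : ℂ) (j : ℕ) : gchoose x j = ff x j / (j.factorial : ℂ) := rfl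

/-! ### Polynomial falling factorials -/

open Polynomial in
noncomputable def ffp (p : Polynomial ℂ) (m : ℕ) : Polynomial ℂ :=
  ∏ i ∈ Finset.range m, (p - Polynomial.C (i : ℂ))

lemma ffp_zero (p : Polynomial ℂ) : ffp p 0 = 1 := by simp [ffp]

lemma ffp_succ (p : Polynomial ℂ) (m : ℕ) :
    ffp p (m + 1) = ffp p m * (p - Polynomial.C (m : ℂ)) := by
  rw [ffp, ffp, Finset.prod_range_succ]

lemma ffp_eval (p : Polynomial ℂ) (m : ℕ) (c : ℂ) :
    (ffp p m).eval c = ff (p.eval c) m := by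
  simp [ffp, ff, Polynomial.eval_prod]

lemma ffp_natDegree_le (p : Polynomial ℂ) (hp : p.natDegree ≤ 1) (m : ℕ) :
    (ffp p m).natDegree ≤ m := by
  refine le_trans (Polynomial.natDegree_prod_le _ _) ?_
  have h : ∀ i ∈ Finset.range m, (p - Polynomial.C (i : ℂ)).natDegree ≤ 1 := by
    intro i _
    refine le_trans (Polynomial.natDegree_sub_le _ _) ?_
    simp [hp]
  calc ∑ i ∈ Finset.range m, (p - Polynomial.C (i : ℂ)).natDegree
      ≤ ∑ _i ∈ Finset.range m, 1 := Finset.sum_le_sum h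
    _ = m := by simp

lemma ffp_comp (p q : Polynomial ℂ) (m : ℕ) :
    (ffp p m).comp q = ffp (p.comp q) m := by
  induction m with
  | zero => simp [ffp_zero]
  | succ m ih => rw [ffp_succ, Polynomial.mul_comp, ih, Polynomial.sub_comp,
      Polynomial.C_comp, ffp_succ]

/-- shift lemma : composing with `X + C a` and subtracting drops the degree. -/
lemma comp_shift_sub_natDegree_le (p : Polynomial ℂ) (a : ℂ) (n : ℕ)
    (hp : p.natDegree ≤ n + 1) :
    (p.comp (Polynomial.X + Polynomial.C a) - p).natDegree ≤ n := by
  rw [← Polynomial.taylor_apply]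
  refine Polynomial.natDegree_le_iff_coeff_eq_zero.2 fun m hm => ?_
  have hm1 : p.natDegree ≤ m := le_trans hp hm
  have hconst : Polynomial.hasseDeriv m p = Polynomial.C (p.coeff m) := by
    have hd : (Polynomial.hasseDeriv m p).natDegree ≤ 0 := by
      refine Polynomial.natDegree_le_iff_coeff_eq_zero.2 fun N hN => ?_
      rw [Polynomial.hasseDeriv_coeff]
      have : p.coeff (N + m) = 0 := by
        apply Polynomial.coeff_eq_zero_of_natDegree_lt
        omega
      simp [this]
    have := Polynomial.eq_C_of_natDegree_le_zero hd
    rw [this, Polynomial.hasseDeriv_coeff]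
    simp
  rw [Polynomial.coeff_sub, Polynomial.taylor_coeff, hconst]
  simp

/-! ### The companion polynomial family -/

noncomputable def HP (j : ℕ) (y : ℂ) (M : Multiset ℂ) : Polynomial ℂ :=
  (M.powerset.map (fun S => ffp (Polynomial.X + Polynomial.C S.sum) (Multiset.card S + j) *
    ffp (Polynomial.C (y - S.sum) - Polynomial.X) (Multiset.card M - Multiset.card S))).sum

lemma multiset_sum_comp {β : Type*} (T : Multiset β) (f : β → Polynomial ℂ)
    (q : Polynomial ℂ) : ((T.map f).sum).comp q = (T.map fun s => (f s).comp q).sum := by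
  induction T using Multiset.induction_on with
  | empty => simp
  | cons a T ih => simp [Polynomial.add_comp, ih]

lemma multiset_sum_map_sub {β γ : Type*} [CommRing γ] (T : Multiset β) (f g : β → γ) :
    (T.map fun s => f s - g s).sum = (T.map f).sum - (T.map g).sum := by
  induction T using Multiset.induction_on with
  | empty => simp
  | cons a T ih => simp [ih]; ring

lemma HP_cons (j : ℕ) (y : ℂ) (a : ℂ) (M : Multiset ℂ) :
    HP j y (a ::ₘ M) = Polynomial.C (y - Multiset.card M - j) * HP j y M
      - HP (j + 1) y M
      + (HP (j + 1) y M).comp (Polynomial.X + Polynomial.C a) := by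
  classical
  set k := Multiset.card M with hk
  have hcard : Multiset.card (a ::ₘ M) = k + 1 := by simp [hk]
  rw [HP, Multiset.powerset_cons, Multiset.map_add, Multiset.sum_add, Multiset.map_map]
  simp only [Function.comp]
  have h1 : (M.powerset.map (fun S => ffp (Polynomial.X + Polynomial.C S.sum)
        (Multiset.card S + j) * ffp (Polynomial.C (y - S.sum) - Polynomial.X)
        (Multiset.card (a ::ₘ M) - Multiset.card S))).sum
      = (M.powerset.map (fun S =>
          Polynomial.C (y - k - j) * (ffp (Polynomial.X + Polynomial.C S.sum)
            (Multiset.card S + j) * ffp (Polynomial.C (y - S.sum) - Polynomial.X)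
            (k - Multiset.card S))
          - (ffp (Polynomial.X + Polynomial.C S.sum) (Multiset.card S + (j + 1)) *
            ffp (Polynomial.C (y - S.sum) - Polynomial.X) (k - Multiset.card S)))).sum := by
    apply congrArg
    apply Multiset.map_congr rfl
    intro S hS
    have hle : Multiset.card S ≤ k := by
      rw [hk]; exact Multiset.card_le_card (Multiset.mem_powerset.1 hS)
    have e1 : Multiset.card (a ::ₘ M) - Multiset.card S = (k - Multiset.card S) + 1 := by
      rw [hcard]; omega
    rw [e1, ffp_succ]
    have e2 : Polynomial.C (y - S.sum) - Polynomial.X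
          - Polynomial.C (((k - Multiset.card S : ℕ) : ℂ))
        = Polynomial.C (y - k - j) - (Polynomial.X + Polynomial.C S.sum
            - Polynomial.C (((Multiset.card S + j : ℕ) : ℂ))) := by
      rw [Nat.cast_sub hle]
      push_cast
      simp only [Polynomial.C_sub, Polynomial.C_add]
      ring
    rw [e2]
    have e3 : Multiset.card S + (j + 1) = (Multiset.card S + j) + 1 := by omega
    rw [e3, ffp_succ]
    ring
  rw [h1, multiset_sum_map_sub]
  have h2 : (M.powerset.map (fun S =>
        Polynomial.C (y - k - j) * (ffp (Polynomial.X + Polynomial.C S.sum)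
          (Multiset.card S + j) * ffp (Polynomial.C (y - S.sum) - Polynomial.X)
          (k - Multiset.card S)))).sum = Polynomial.C (y - k - j) * HP j y M := by
    rw [HP, Multiset.sum_map_mul_left]
  have h3 : (M.powerset.map (fun S => ffp (Polynomial.X + Polynomial.C ((a ::ₘ S).sum))
        (Multiset.card (a ::ₘ S) + j) * ffp (Polynomial.C (y - (a ::ₘ S).sum) - Polynomial.X)
        (Multiset.card (a ::ₘ M) - Multiset.card (a ::ₘ S)))).sum
      = (HP (j + 1) y M).comp (Polynomial.X + Polynomial.C a) := by
    rw [HP, multiset_sum_comp]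
    apply congrArg
    apply Multiset.map_congr rfl
    intro S hS
    simp only [Function.comp_apply, Polynomial.mul_comp, ffp_comp, Polynomial.sub_comp,
      Polynomial.add_comp, Polynomial.C_comp, Polynomial.X_comp, Multiset.card_cons,
      Multiset.sum_cons, hcard]
    have e4 : Multiset.card S + 1 + j = Multiset.card S + (j + 1) := by omega
    have e5 : k + 1 - (Multiset.card S + 1) = k - Multiset.card S := by omega
    rw [e4, e5]
    have p1 : Polynomial.X + Polynomial.C a + Polynomial.C S.sum
        = Polynomial.X + Polynomial.C (a + S.sum) := by
      rw [add_assoc, ← Polynomial.C_add]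
    have p2 : Polynomial.C (y - S.sum) - (Polynomial.X + Polynomial.C a)
        = Polynomial.C (y - (a + S.sum)) - Polynomial.X := by
      simp only [Polynomial.C_sub, Polynomial.C_add]
      ring
    rw [p1, p2]
  rw [h2, h3]
  simp only [HP, hk]

lemma HP_natDegree_le (M : Multiset ℂ) : ∀ (j : ℕ) (y : ℂ), (HP j y M).natDegree ≤ j := by
  induction M using Multiset.induction_on with
  | empty =>
      intro j y
      have : HP j y 0 = ffp (Polynomial.X + Polynomial.C (0 : ℂ)) j := by
        simp [HP, ffp_zero]
      rw [this]
      apply ffp_natDegree_le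
      simp
  | cons a M ih =>
      intro j y
      rw [HP_cons]
      have hre : Polynomial.C (y - Multiset.card M - j) * HP j y M - HP (j + 1) y M
            + (HP (j + 1) y M).comp (Polynomial.X + Polynomial.C a)
          = Polynomial.C (y - Multiset.card M - j) * HP j y M
            + ((HP (j + 1) y M).comp (Polynomial.X + Polynomial.C a) - HP (j + 1) y M) := by
        ring
      rw [hre]
      refine le_trans (Polynomial.natDegree_add_le _ _) (max_le ?_ ?_)
      · exact le_trans (Polynomial.natDegree_C_mul_le _ _) (ih j y)
      · exact comp_shift_sub_natDegree_le _ a j (ih (j + 1) y)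

lemma HP_eval_const (y : ℂ) (M : Multiset ℂ) (c c' : ℂ) :
    (HP 0 y M).eval c = (HP 0 y M).eval c' := by
  rw [Polynomial.eq_C_of_natDegree_le_zero (HP_natDegree_le M 0 y)]
  simp

/-! ### The key identity over multisets -/

noncomputable def Tm (k : ℕ) (x τ : ℂ) (l : ℕ) (s : ℂ) : ℂ :=
  if l = 0 then ff (τ - x) k else x * ff (x + s - 1) (l - 1) * ff (τ - x - s) (k - l)

lemma HP0_eval (y : ℂ) (M : Multiset ℂ) (c : ℂ) :
    (HP 0 y M).eval c
      = (M.powerset.map (fun S => ff (c + S.sum) (Multiset.card S)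
          * ff (y - S.sum - c) (Multiset.card M - Multiset.card S))).sum := by
  have ev : ∀ T : Multiset (Polynomial ℂ), T.sum.eval c = (T.map (fun p => p.eval c)).sum := by
    intro T
    induction T using Multiset.induction_on with
    | empty => simp
    | cons p T ih => simp [ih]
  rw [HP, ev, Multiset.map_map]
  apply congrArg
  apply Multiset.map_congr rfl
  intro S hS
  simp [ffp_eval]

lemma keym (M : Multiset ℂ) : ∀ x τ : ℂ,
    (M.powerset.map (fun S => Tm (Multiset.card M) x τ (Multiset.card S) S.sum)).sum
      = ff τ (Multiset.card M) := by
  induction M using Multiset.induction_on with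
  | empty =>
      intro x τ
      simp [Multiset.powerset_zero, Tm, ff_zero]
  | cons a M ih =>
      intro x τ
      have hca : Multiset.card (a ::ₘ M) = Multiset.card M + 1 := Multiset.card_cons a M
      rw [Multiset.powerset_cons, Multiset.map_add, Multiset.sum_add, Multiset.map_map]
      simp only [Function.comp]
      have h1 : (M.powerset.map
            (fun S => Tm (Multiset.card (a ::ₘ M)) x τ (Multiset.card S) S.sum)).sum
          = (M.powerset.map (fun S =>
              (τ - (Multiset.card M : ℂ)) * Tm (Multiset.card M) x τ (Multiset.card S) S.sum
              - x * (ff (x - 1 + S.sum) (Multiset.card S)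
                  * ff (τ - 1 - S.sum - (x - 1))
                      (Multiset.card M - Multiset.card S)))).sum := by
        apply congrArg
        apply Multiset.map_congr rfl
        intro S hS
        have hle : Multiset.card S ≤ Multiset.card M :=
          Multiset.card_le_card (Multiset.mem_powerset.1 hS)
        rw [hca]
        rcases Nat.eq_zero_or_pos (Multiset.card S) with h0 | hpos
        · have hS0 : S = 0 := by rw [← Multiset.card_eq_zero]; exact h0
          subst hS0
          simp only [Multiset.card_zero, Multiset.sum_zero, Tm, eq_self_iff_true, if_true]
          rw [ff_succ]
          simp only [ff_zero, Nat.sub_zero, sub_zero]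
          have a0' : τ - 1 - (x - 1) = τ - x := by ring
          rw [a0']
          ring
        · obtain ⟨l', hl⟩ : ∃ l', Multiset.card S = l' + 1 := ⟨Multiset.card S - 1, by omega⟩
          rw [hl] at hle ⊢
          simp only [Tm, Nat.succ_ne_zero, if_false, Nat.add_sub_cancel]
          have e1 : Multiset.card M + 1 - (l' + 1) = (Multiset.card M - (l' + 1)) + 1 := by omega
          have a1 : x - 1 + S.sum = x + S.sum - 1 := by ring
          have a2 : τ - 1 - S.sum - (x - 1) = τ - x - S.sum := by ring
          rw [e1, ff_succ, a1, a2, ff_succ, Nat.cast_sub hle]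
          push_cast
          ring
      rw [h1, multiset_sum_map_sub, Multiset.sum_map_mul_left, Multiset.sum_map_mul_left, ih,
        ← HP0_eval (τ - 1) M (x - 1)]
      have h2 : (M.powerset.map
            (fun S => Tm (Multiset.card (a ::ₘ M)) x τ (Multiset.card (a ::ₘ S)) (a ::ₘ S).sum)).sum
          = x * (HP 0 (τ - 1) M).eval (x + a - 1) := by
        rw [HP0_eval, ← Multiset.sum_map_mul_left]
        apply congrArg
        apply Multiset.map_congr rfl
        intro S hS
        have hle : Multiset.card S ≤ Multiset.card M :=
          Multiset.card_le_card (Multiset.mem_powerset.1 hS)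
        rw [hca]
        simp only [Multiset.card_cons, Multiset.sum_cons, Tm, Nat.succ_ne_zero, if_false,
          Nat.add_sub_cancel]
        have e1 : Multiset.card M + 1 - (Multiset.card S + 1) = Multiset.card M - Multiset.card S := by
          omega
        rw [e1]
        have a1 : x + (a + S.sum) - 1 = x + a - 1 + S.sum := by ring
        have a2 : τ - x - (a + S.sum) = τ - 1 - S.sum - (x + a - 1) := by ring
        rw [a1, a2]
        ring
      rw [h2, HP_eval_const (τ - 1) M (x - 1) (x + a - 1), hca, ff_succ]
      ring

/-! ### Powerset sum lemmas -/

lemma sum_powerset_add (s : Multiset ℂ) : ∀ (t : Multiset ℂ) (f : Multiset ℂ → ℂ),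
    ((s + t).powerset.map f).sum
      = (s.powerset.map (fun S1 => ((t.powerset.map (fun S2 => f (S1 + S2))).sum))).sum := by
  induction s using Multiset.induction_on with
  | empty =>
      intro t f
      simp [Multiset.powerset_zero]
  | cons a s ih =>
      intro t f
      have hca : a ::ₘ s + t = a ::ₘ (s + t) := by rw [Multiset.cons_add]
      rw [hca, Multiset.powerset_cons, Multiset.map_add, Multiset.sum_add, Multiset.map_map,
        Multiset.powerset_cons, Multiset.map_add, Multiset.sum_add, Multiset.map_map]
      simp only [Function.comp]
      rw [ih t f, ih t (fun U => f (a ::ₘ U))]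
      congr 1
      apply congrArg
      apply Multiset.map_congr rfl
      intro S1 _
      apply congrArg
      apply Multiset.map_congr rfl
      intro S2 _
      rw [Multiset.cons_add]

lemma sum_powerset_replicate (a : ℂ) : ∀ (v : ℕ) (f : Multiset ℂ → ℂ),
    ((Multiset.replicate v a).powerset.map f).sum
      = ∑ j ∈ Finset.range (v + 1), (v.choose j : ℂ) * f (Multiset.replicate j a) := by
  intro v
  induction v with
  | zero =>
      intro f
      simp [Multiset.powerset_zero]
  | succ v ih =>
      intro f
      rw [Multiset.replicate_succ, Multiset.powerset_cons, Multiset.map_add, Multiset.sum_add,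
        Multiset.map_map]
      simp only [Function.comp]
      rw [ih f, ih (fun U => f (a ::ₘ U))]
      have key : ∑ j ∈ Finset.range (v + 1 + 1), ((v+1).choose j : ℂ) * f (Multiset.replicate j a)
          = (∑ i ∈ Finset.range (v + 1), (v.choose i : ℂ) * f (Multiset.replicate (i + 1) a))
            + ∑ j ∈ Finset.range (v + 1), (v.choose j : ℂ) * f (Multiset.replicate j a) := by
        rw [Finset.sum_range_succ'
          (fun j => ((v+1).choose j : ℂ) * f (Multiset.replicate j a)) (v + 1)]
        have hsplit : ∀ i ∈ Finset.range (v + 1),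
            (((v+1).choose (i+1) : ℕ) : ℂ) * f (Multiset.replicate (i+1) a)
              = (v.choose i : ℂ) * f (Multiset.replicate (i+1) a)
                + (v.choose (i+1) : ℂ) * f (Multiset.replicate (i+1) a) := by
          intro i _
          rw [Nat.choose_succ_succ]
          push_cast
          ring
        rw [Finset.sum_congr rfl hsplit, Finset.sum_add_distrib]
        have h2 : (∑ i ∈ Finset.range (v + 1),
              (v.choose (i+1) : ℂ) * f (Multiset.replicate (i+1) a))
              + ((v+1).choose 0 : ℂ) * f (Multiset.replicate 0 a)
            = ∑ j ∈ Finset.range (v + 1), (v.choose j : ℂ) * f (Multiset.replicate j a) := by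
          have h3 := Finset.sum_range_succ'
            (fun j => (v.choose j : ℂ) * f (Multiset.replicate j a)) (v + 1)
          have h4 : ∑ j ∈ Finset.range (v + 1 + 1), (v.choose j : ℂ) * f (Multiset.replicate j a)
              = ∑ j ∈ Finset.range (v + 1), (v.choose j : ℂ) * f (Multiset.replicate j a) := by
            rw [Finset.sum_range_succ]
            simp [Nat.choose_succ_self]
          rw [← h4, h3]
          simp
        rw [add_assoc, h2]
      rw [key, add_comm]
      simp only [Multiset.replicate_succ]

/-! ### Bridge from box sums to multiset powerset sums -/

lemma sum_piFinset_succ {d : ℕ} (Fs : Fin (d + 1) → Finset ℕ) (H : (Fin (d + 1) → ℕ) → ℂ) :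
    ∑ i ∈ Fintype.piFinset Fs, H i
      = ∑ a ∈ Fs 0, ∑ i' ∈ Fintype.piFinset (fun r : Fin d => Fs r.succ), H (Fin.cons a i') := by
  rw [← Finset.sum_product']
  refine Finset.sum_nbij' (i := fun i => ((i 0 : ℕ), Fin.tail i))
    (j := fun p => Fin.cons p.1 p.2) ?_ ?_ ?_ ?_ ?_
  · intro i hi
    rw [Finset.mem_product]
    have := Fin.mem_piFinset_iff_zero_tail.1 hi
    exact ⟨this.1, this.2⟩
  · intro p hp
    rw [Finset.mem_product] at hp
    rw [Fin.mem_piFinset_iff_zero_tail]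
    refine ⟨by simp [hp.1], ?_⟩
    rw [Fin.tail_cons]
    rw [Fintype.mem_piFinset]
    intro r
    have := Fintype.mem_piFinset.1 hp.2 r
    simpa [Fin.tail] using this
  · intro i _
    exact Fin.cons_self_tail i
  · intro p _
    simp [Fin.tail_cons]
  · intro i _
    rw [Fin.cons_self_tail]

lemma bridge : ∀ (d : ℕ) (v : Fin d → ℕ) (u : Fin d → ℂ) (G : ℕ → ℂ → ℂ),
    ∑ i ∈ Fintype.piFinset (fun r => Finset.range (v r + 1)),
        (∏ r, ((v r).choose (i r) : ℂ)) * G (∑ r, i r) (∑ r, (i r : ℂ) * u r)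
      = (((∑ r, Multiset.replicate (v r) (u r)) : Multiset ℂ).powerset.map
          (fun S => G (Multiset.card S) S.sum)).sum := by
  intro d
  induction d with
  | zero =>
      intro v u G
      have h1 : (Fintype.piFinset (fun r : Fin 0 => Finset.range (v r + 1)))
          = {(fun _ => 0 : Fin 0 → ℕ)} := by
        ext i
        simp only [Fintype.mem_piFinset, Finset.mem_singleton]
        constructor
        · intro _
          funext r
          exact r.elim0
        · intro h r
          exact r.elim0
      rw [h1]
      simp [Multiset.powerset_zero]
  | succ d ihd =>
      intro v u G
      rw [sum_piFinset_succ (fun r => Finset.range (v r + 1))]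
      have lhs1 : ∀ a ∈ Finset.range (v 0 + 1),
          (∑ i' ∈ Fintype.piFinset (fun r : Fin d => Finset.range (v r.succ + 1)),
            (∏ r, ((v r).choose ((Fin.cons a i' : Fin (d+1) → ℕ) r) : ℂ))
              * G (∑ r, (Fin.cons a i' : Fin (d+1) → ℕ) r)
                  (∑ r, ((Fin.cons a i' : Fin (d+1) → ℕ) r : ℂ) * u r))
          = ((v 0).choose a : ℂ) *
            ((∑ r : Fin d, Multiset.replicate (v r.succ) (u r.succ)).powerset.map
              (fun S => G (a + Multiset.card S) ((a : ℂ) * u 0 + S.sum))).sum := by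
        intro a _
        rw [← ihd (fun r => v r.succ) (fun r => u r.succ)
          (fun l s => G (a + l) ((a : ℂ) * u 0 + s))]
        rw [Finset.mul_sum]
        apply Finset.sum_congr rfl
        intro i' _
        simp only [Fin.prod_univ_succ, Fin.sum_univ_succ, Fin.cons_zero, Fin.cons_succ]
        ring
      rw [Finset.sum_congr rfl lhs1]
      rw [show (∑ r : Fin (d+1), Multiset.replicate (v r) (u r))
          = Multiset.replicate (v 0) (u 0) + ∑ r : Fin d, Multiset.replicate (v r.succ) (u r.succ)
        from Fin.sum_univ_succ _]
      rw [sum_powerset_add, sum_powerset_replicate]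
      apply Finset.sum_congr rfl
      intro a _
      apply congrArg
      apply congrArg
      apply Multiset.map_congr rfl
      intro S _
      simp only [Multiset.card_add, Multiset.card_replicate, Multiset.sum_add,
        Multiset.sum_replicate, nsmul_eq_mul]

/-! ### Part A : from the (l, m) double sum to the box sum -/

lemma partA (d k n : ℕ) (v : Fin d → ℕ) (hs : ∑ r, v r = k)
    (hw : ∑ r : Fin d, ((r : ℕ) + 1) * v r = n) (g : ℕ → ℕ → ℂ) :
    ∑ l ∈ Finset.range (k + 1), ∑ m ∈ Finset.Icc l n, (W d m l v : ℂ) * g l m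
      = ∑ i ∈ Fintype.piFinset (fun r => Finset.range (v r + 1)),
          (∏ r, ((v r).choose (i r) : ℂ)) * g (∑ r, i r) (∑ r : Fin d, ((r : ℕ) + 1) * i r) := by
  have hvn : ∀ r, v r ≤ n := by
    intro r
    calc v r ≤ ((r : ℕ) + 1) * v r := Nat.le_mul_of_pos_left _ (Nat.succ_pos _)
      _ ≤ ∑ r' : Fin d, ((r' : ℕ) + 1) * v r' :=
        Finset.single_le_sum (f := fun r' : Fin d => ((r' : ℕ) + 1) * v r')
          (fun r' _ => Nat.zero_le _) (Finset.mem_univ r)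
      _ = n := hw
  set P := Fintype.piFinset (fun r => Finset.range (v r + 1)) with hP
  set h : (Fin d → ℕ) → ℂ := fun i =>
    (∏ r, ((v r).choose (i r) : ℂ)) * g (∑ r, i r) (∑ r : Fin d, ((r : ℕ) + 1) * i r) with hh
  have hle : ∀ i ∈ P, ∀ r, i r ≤ v r := by
    intro i hi r
    have := Fintype.mem_piFinset.1 hi r
    rw [Finset.mem_range] at this
    omega
  have step1 : ∑ i ∈ P, h i
      = ∑ l ∈ Finset.range (k + 1), ∑ i ∈ P.filter (fun i => ∑ r, i r = l), h i := by
    rw [Finset.sum_fiberwise_of_maps_to ?_ h]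
    intro i hi
    rw [Finset.mem_range]
    have : ∑ r, i r ≤ ∑ r, v r := Finset.sum_le_sum (fun r _ => hle i hi r)
    omega
  have step2 : ∀ l ∈ Finset.range (k + 1),
      ∑ i ∈ P.filter (fun i => ∑ r, i r = l), h i
        = ∑ m ∈ Finset.Icc l n,
            ∑ i ∈ (P.filter (fun i => ∑ r, i r = l)).filter
              (fun i => ∑ r : Fin d, ((r : ℕ) + 1) * i r = m), h i := by
    intro l _
    rw [Finset.sum_fiberwise_of_maps_to ?_ h]
    intro i hi
    rw [Finset.mem_filter] at hi
    rw [Finset.mem_Icc]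
    constructor
    · rw [← hi.2]
      exact Finset.sum_le_sum (fun r _ => Nat.le_mul_of_pos_left _ (Nat.succ_pos _))
    · rw [← hw]
      exact Finset.sum_le_sum
        (fun r _ => Nat.mul_le_mul_left _ (hle i hi.1 r))
  have step3 : ∀ l ∈ Finset.range (k + 1), ∀ m ∈ Finset.Icc l n,
      (W d m l v : ℂ) * g l m
        = ∑ i ∈ (P.filter (fun i => ∑ r, i r = l)).filter
            (fun i => ∑ r : Fin d, ((r : ℕ) + 1) * i r = m), h i := by
    intro l _ m _
    have hW : (W d m l v : ℂ) = ∑ i ∈ parts d m l, ∏ r, ((v r).choose (i r) : ℂ) := by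
      rw [W]
      push_cast
      rfl
    rw [hW, Finset.sum_mul]
    have hsub : (P.filter (fun i => ∑ r, i r = l)).filter
        (fun i => ∑ r : Fin d, ((r : ℕ) + 1) * i r = m) ⊆ parts d m l := by
      intro i hi
      rw [Finset.mem_filter] at hi
      rcases hi with ⟨hi1, hi2⟩
      rw [Finset.mem_filter] at hi1
      rcases hi1 with ⟨hi0, hi3⟩
      rw [parts, Finset.mem_filter]
      refine ⟨?_, hi3, hi2⟩
      rw [Fintype.mem_piFinset]
      intro r
      rw [Finset.mem_range]
      have h1 : i r ≤ ((r : ℕ) + 1) * i r := Nat.le_mul_of_pos_left _ (Nat.succ_pos _)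
      have h2 : ((r : ℕ) + 1) * i r ≤ ∑ r' : Fin d, ((r' : ℕ) + 1) * i r' :=
        Finset.single_le_sum (f := fun r' : Fin d => ((r' : ℕ) + 1) * i r')
          (fun r' _ => Nat.zero_le _) (Finset.mem_univ r)
      omega
    rw [← Finset.sum_subset hsub ?_]
    · apply Finset.sum_congr rfl
      intro i hi
      rw [Finset.mem_filter] at hi
      rcases hi with ⟨hi1, hi2⟩
      rw [Finset.mem_filter] at hi1
      rw [hh]
      dsimp only
      rw [hi1.2, hi2]
    · intro i hi hni
      rw [parts, Finset.mem_filter] at hi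
      have : ∃ r, ¬ (i r ≤ v r) := by
        by_contra hcon
        push_neg at hcon
        apply hni
        rw [Finset.mem_filter, Finset.mem_filter]
        refine ⟨⟨?_, hi.2.1⟩, hi.2.2⟩
        rw [hP, Fintype.mem_piFinset]
        intro r
        rw [Finset.mem_range]
        have := hcon r
        omega
      rcases this with ⟨r, hr⟩
      have hz : ((v r).choose (i r) : ℂ) = 0 := by
        rw [Nat.choose_eq_zero_of_lt (by omega)]
        norm_num
      rw [Finset.prod_eq_zero (Finset.mem_univ r) hz, zero_mul]
  calc ∑ l ∈ Finset.range (k + 1), ∑ m ∈ Finset.Icc l n, (W d m l v : ℂ) * g l m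
      = ∑ l ∈ Finset.range (k + 1), ∑ m ∈ Finset.Icc l n,
          ∑ i ∈ (P.filter (fun i => ∑ r, i r = l)).filter
            (fun i => ∑ r : Fin d, ((r : ℕ) + 1) * i r = m), h i := by
        apply Finset.sum_congr rfl
        intro l hl
        exact Finset.sum_congr rfl (fun m hm => step3 l hl m hm)
    _ = ∑ l ∈ Finset.range (k + 1), ∑ i ∈ P.filter (fun i => ∑ r, i r = l), h i := by
        apply Finset.sum_congr rfl
        intro l hl
        exact (step2 l hl).symm
    _ = ∑ i ∈ P, h i := step1.symm

theorem stmt3 (d k n : ℕ) (hk : 0 < k) (v : Fin d → ℕ)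
    (hs : ∑ r, v r = k) (hw : ∑ r : Fin d, ((r : ℕ) + 1) * v r = n)
    (A B C : ℂ)
    (hα : ∀ l m : ℕ, l ≤ k → m ≤ n → A * l + B * m + C ≠ 0)
    (τ : ℂ) :
    ∑ l ∈ Finset.range (k + 1), ∑ m ∈ Finset.Icc l n,
      (C / (A * l + B * m + C)) *
        gchoose (τ - (A * l + B * m + C)) (k - l) * gchoose (A * l + B * m + C) l /
          (k.choose l : ℂ) * (W d m l v : ℂ)
      = gchoose τ k := by
  have hC : C ≠ 0 := by
    have := hα 0 0 (Nat.zero_le k) (Nat.zero_le n)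
    simpa using this
  have g0 : ∀ x : ℂ, gchoose x 0 = 1 := by
    intro x
    rw [gchoose_eq, ff_zero]
    simp
  have hterm : ∀ l ∈ Finset.range (k + 1), ∀ m ∈ Finset.Icc l n,
      (C / (A * l + B * m + C)) * gchoose (τ - (A * l + B * m + C)) (k - l)
        * gchoose (A * l + B * m + C) l / (k.choose l : ℂ) * (W d m l v : ℂ)
      = (W d m l v : ℂ) * Tm k C τ l (A * l + B * m) / (k.factorial : ℂ) := by
    intro l hl m hm
    rw [Finset.mem_range] at hl
    rw [Finset.mem_Icc] at hm
    have hlk : l ≤ k := by omega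
    have hα' := hα l m hlk hm.2
    rcases Nat.eq_zero_or_pos l with h0 | hpos
    · subst h0
      rcases Nat.eq_zero_or_pos m with hm0 | hmpos
      · subst hm0
        have α0 : A * ((0 : ℕ) : ℂ) + B * ((0 : ℕ) : ℂ) + C = C := by push_cast; ring
        rw [α0]
        have hTm : Tm k C τ 0 (A * ((0 : ℕ) : ℂ) + B * ((0 : ℕ) : ℂ)) = ff (τ - C) k := by
          rw [Tm, if_pos rfl]
        rw [hTm, div_self hC, one_mul, g0, Nat.choose_zero_right, Nat.sub_zero, gchoose_eq]
        push_cast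
        ring
      · have hparts : parts d m 0 = ∅ := by
          rw [Finset.eq_empty_iff_forall_notMem]
          intro i hi
          rw [parts, Finset.mem_filter] at hi
          rcases hi with ⟨_, h1, h2⟩
          have hz : ∀ r ∈ Finset.univ, i r = 0 :=
            (Finset.sum_eq_zero_iff).1 h1
          rw [Finset.sum_eq_zero (fun r hr => by rw [hz r hr, mul_zero])] at h2
          omega
        have hW : (W d m 0 v : ℂ) = 0 := by
          rw [W, hparts]
          simp
        rw [hW, mul_zero, zero_mul]
        simp
    · obtain ⟨l', rfl⟩ : ∃ l', l = l' + 1 := ⟨l - 1, by omega⟩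
      have hch : (k.choose (l' + 1) : ℂ) ≠ 0 := by
        rw [Nat.cast_ne_zero]
        exact (Nat.choose_pos hlk).ne'
      have hfact : ((k.choose (l' + 1)) : ℂ) * (((l' + 1).factorial : ℕ) : ℂ)
            * (((k - (l' + 1)).factorial : ℕ) : ℂ) = ((k.factorial : ℕ) : ℂ) := by
        rw [← Nat.cast_mul, ← Nat.cast_mul, Nat.choose_mul_factorial_mul_factorial hlk]
      have hkf : ((k.factorial : ℕ) : ℂ) ≠ 0 := Nat.cast_ne_zero.2 (Nat.factorial_ne_zero k)
      have hlf : (((l' + 1).factorial : ℕ) : ℂ) ≠ 0 := Nat.cast_ne_zero.2 (Nat.factorial_ne_zero _)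
      have hklf : (((k - (l' + 1)).factorial : ℕ) : ℂ) ≠ 0 :=
        Nat.cast_ne_zero.2 (Nat.factorial_ne_zero _)
      have hTm : Tm k C τ (l' + 1) (A * ((l' + 1 : ℕ) : ℂ) + B * m)
          = C * ff (A * ((l' + 1 : ℕ) : ℂ) + B * m + C - 1) l'
            * ff (τ - (A * ((l' + 1 : ℕ) : ℂ) + B * m + C)) (k - (l' + 1)) := by
        rw [Tm, if_neg (Nat.succ_ne_zero l')]
        have a1 : C + (A * ((l' + 1 : ℕ) : ℂ) + B * m) - 1
            = A * ((l' + 1 : ℕ) : ℂ) + B * m + C - 1 := by ring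
        have a2 : τ - C - (A * ((l' + 1 : ℕ) : ℂ) + B * m)
            = τ - (A * ((l' + 1 : ℕ) : ℂ) + B * m + C) := by ring
        rw [a1, a2, Nat.add_sub_cancel]
      rw [hTm, gchoose_eq, gchoose_eq]
      have hffα : ff (A * ((l' + 1 : ℕ) : ℂ) + B * m + C) (l' + 1)
          = (A * ((l' + 1 : ℕ) : ℂ) + B * m + C)
            * ff (A * ((l' + 1 : ℕ) : ℂ) + B * m + C - 1) l' := ff_shift _ l'
      rw [hffα]
      set γ : ℂ := A * ((l' + 1 : ℕ) : ℂ) + B * (m : ℂ) + C with hγ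
      set f1 : ℂ := ff (τ - γ) (k - (l' + 1)) with hf1
      set f2 : ℂ := ff (γ - 1) l' with hf2
      rw [← hfact]
      field_simp
  rw [Finset.sum_congr rfl (fun l hl => Finset.sum_congr rfl (fun m hm => hterm l hl m hm))]
  have hdiv : ∑ l ∈ Finset.range (k + 1), ∑ m ∈ Finset.Icc l n,
      (W d m l v : ℂ) * Tm k C τ l (A * l + B * m) / (k.factorial : ℂ)
      = (∑ l ∈ Finset.range (k + 1), ∑ m ∈ Finset.Icc l n,
          (W d m l v : ℂ) * Tm k C τ l (A * l + B * m)) / (k.factorial : ℂ) := by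
    rw [Finset.sum_div]
    apply Finset.sum_congr rfl
    intro l _
    rw [Finset.sum_div]
  rw [hdiv, gchoose_eq]
  have hmain : ∑ l ∈ Finset.range (k + 1), ∑ m ∈ Finset.Icc l n,
      (W d m l v : ℂ) * Tm k C τ l (A * l + B * m) = ff τ k := by
    rw [partA d k n v hs hw (fun l m => Tm k C τ l (A * (l : ℕ) + B * (m : ℕ)))]
    set u : Fin d → ℂ := fun r => A + ((r : ℕ) + 1) * B with hu
    have harg : ∀ i : Fin d → ℕ,
        A * ((∑ r, i r : ℕ) : ℂ) + B * ((∑ r : Fin d, ((r : ℕ) + 1) * i r : ℕ) : ℂ)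
          = ∑ r, (i r : ℂ) * u r := by
      intro i
      rw [hu]
      push_cast
      rw [Finset.mul_sum, Finset.mul_sum, ← Finset.sum_add_distrib]
      apply Finset.sum_congr rfl
      intro r _
      ring
    have hpt : ∀ i ∈ Fintype.piFinset (fun r => Finset.range (v r + 1)),
        (∏ r, ((v r).choose (i r) : ℂ))
            * Tm k C τ (∑ r, i r) (A * ((∑ r, i r : ℕ) : ℂ)
                + B * ((∑ r : Fin d, ((r : ℕ) + 1) * i r : ℕ) : ℂ))
          = (∏ r, ((v r).choose (i r) : ℂ)) * Tm k C τ (∑ r, i r) (∑ r, (i r : ℂ) * u r) := by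
      intro i _
      rw [harg i]
    rw [Finset.sum_congr rfl hpt, bridge d v u (Tm k C τ)]
    have hcM : Multiset.card (∑ r, Multiset.replicate (v r) (u r)) = k := by
      rw [Multiset.card_sum]
      simp only [Multiset.card_replicate]
      exact hs
    have := keym (∑ r, Multiset.replicate (v r) (u r)) C τ
    rw [hcM] at this
    exact this
  rw [hmain]
end

section
/- Hagen–Rothe identity: for complex numbers x, y, z (with x + l*z and y + (k-l)*z nonzero for 0 <= l <= k, and x+y+kz nonzero), sum over l=0..k of [x/(x+l*z)] * C(x+l*z, l) * [y/(y+(k-l)*z)] * C(y+(k-l)*z, k-l) equals [(x+y)/(x+y+k*z)] * C(x+y+k*z, k). -/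
open Finset

/-- The Rothe polynomial `A z x l = x/(x+lz) * C(x+lz, l)` in its polynomial form. -/
noncomputable def Apoly (z x : ℂ) : ℕ → ℂ
  | 0 => 1
  | n + 1 => x * (∏ i ∈ Finset.range n, (x + ((n : ℂ) + 1) * z - ((i : ℂ) + 1))) /
      ((n + 1).factorial : ℂ)

/-- `Bpoly z x n = C(x + n z, n)`. -/
noncomputable def Bpoly (z x : ℂ) (n : ℕ) : ℂ := gchoose (x + (n : ℂ) * z) n

lemma gchoose_zero (x : ℂ) : gchoose x 0 = 1 := by simp [gchoose]

lemma Bpoly_zero (z x : ℂ) : Bpoly z x 0 = 1 := by simp [Bpoly, gchoose]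

lemma Apoly_zero' (z x : ℂ) : Apoly z x 0 = 1 := rfl

lemma Apoly_of_zero (z : ℂ) (n : ℕ) : Apoly z 0 (n + 1) = 0 := by
  simp [Apoly]

lemma factorial_cast_ne (n : ℕ) : ((n.factorial : ℂ)) ≠ 0 := by
  exact_mod_cast Nat.cast_ne_zero.mpr (Nat.factorial_ne_zero n)

/-- `B z x (n+1) = A z x (n+1) + z * B z (x+z-1) n`. -/
lemma Bpoly_succ (z x : ℂ) (n : ℕ) :
    Bpoly z x (n + 1) = Apoly z x (n + 1) + z * Bpoly z (x + z - 1) n := by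
  have hfac : (((n + 1).factorial : ℕ) : ℂ) = ((n : ℂ) + 1) * (n.factorial : ℂ) := by
    rw [Nat.factorial_succ]; push_cast; ring
  have hP : (∏ i ∈ Finset.range n, (x + z - 1 + (n : ℂ) * z - (i : ℂ)))
      = ∏ i ∈ Finset.range n, (x + ((n : ℂ) + 1) * z - ((i : ℂ) + 1)) :=
    Finset.prod_congr rfl (fun i _ => by ring)
  have hQ : (∏ i ∈ Finset.range (n + 1), (x + ((n : ℕ) + 1 : ℕ) * z - (i : ℂ)))
      = (∏ i ∈ Finset.range n, (x + ((n : ℂ) + 1) * z - ((i : ℂ) + 1))) *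
        (x + ((n : ℂ) + 1) * z) := by
    rw [Finset.prod_range_succ',
      show (∏ i ∈ Finset.range n, (x + (((n : ℕ) + 1 : ℕ) : ℂ) * z - ((i + 1 : ℕ) : ℂ)))
        = ∏ i ∈ Finset.range n, (x + ((n : ℂ) + 1) * z - ((i : ℂ) + 1)) from
        Finset.prod_congr rfl (fun i _ => by push_cast; ring)]
    push_cast
    ring
  simp only [Bpoly, Apoly, gchoose]
  rw [hQ, hP, hfac]
  have h1 : ((n : ℂ) + 1) ≠ 0 := by exact_mod_cast Nat.succ_ne_zero n
  have h2 := factorial_cast_ne n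
  field_simp

/-- Pascal: `B z x (n+1) = B z (x-1) (n+1) + B z (x+z-1) n`. -/
lemma gchoose_pascal (w : ℂ) (n : ℕ) :
    gchoose w (n + 1) = gchoose (w - 1) (n + 1) + gchoose (w - 1) n := by
  have hfac : (((n + 1).factorial : ℕ) : ℂ) = ((n : ℂ) + 1) * (n.factorial : ℂ) := by
    rw [Nat.factorial_succ]; push_cast; ring
  have h1 : (∏ i ∈ Finset.range (n + 1), (w - (i : ℂ)))
      = (∏ i ∈ Finset.range n, (w - 1 - (i : ℂ))) * w := by
    rw [Finset.prod_range_succ',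
      show (∏ i ∈ Finset.range n, (w - ((i + 1 : ℕ) : ℂ)))
        = ∏ i ∈ Finset.range n, (w - 1 - (i : ℂ)) from
        Finset.prod_congr rfl (fun i _ => by push_cast; ring)]
    push_cast
    ring
  have h2 : (∏ i ∈ Finset.range (n + 1), (w - 1 - (i : ℂ)))
      = (∏ i ∈ Finset.range n, (w - 1 - (i : ℂ))) * (w - 1 - (n : ℂ)) := by
    rw [Finset.prod_range_succ]
  simp only [gchoose]
  rw [h1, h2, hfac]
  have hn : ((n : ℂ) + 1) ≠ 0 := by exact_mod_cast Nat.succ_ne_zero n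
  have h3 := factorial_cast_ne n
  field_simp
  ring

lemma Bpoly_pascal (z x : ℂ) (n : ℕ) :
    Bpoly z x (n + 1) = Bpoly z (x - 1) (n + 1) + Bpoly z (x + z - 1) n := by
  have e1 : x - 1 + ((n + 1 : ℕ) : ℂ) * z = (x + ((n + 1 : ℕ) : ℂ) * z) - 1 := by ring
  have e2 : x + z - 1 + (n : ℂ) * z = (x + ((n + 1 : ℕ) : ℂ) * z) - 1 := by push_cast; ring
  simp only [Bpoly]
  rw [e1, e2, gchoose_pascal]

/-- `f : ℂ → ℂ` is (the evaluation of) a polynomial. -/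
def PolyFun (f : ℂ → ℂ) : Prop := ∃ p : Polynomial ℂ, ∀ t, f t = p.eval t

lemma PolyFun.const (c : ℂ) : PolyFun (fun _ => c) := ⟨Polynomial.C c, by simp⟩

lemma PolyFun.add {f g : ℂ → ℂ} (hf : PolyFun f) (hg : PolyFun g) :
    PolyFun (fun t => f t + g t) := by
  obtain ⟨p, hp⟩ := hf; obtain ⟨q, hq⟩ := hg
  exact ⟨p + q, fun t => by simp [hp, hq]⟩

lemma PolyFun.sub {f g : ℂ → ℂ} (hf : PolyFun f) (hg : PolyFun g) :
    PolyFun (fun t => f t - g t) := by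
  obtain ⟨p, hp⟩ := hf; obtain ⟨q, hq⟩ := hg
  exact ⟨p - q, fun t => by simp [hp, hq]⟩

lemma PolyFun.mul {f g : ℂ → ℂ} (hf : PolyFun f) (hg : PolyFun g) :
    PolyFun (fun t => f t * g t) := by
  obtain ⟨p, hp⟩ := hf; obtain ⟨q, hq⟩ := hg
  exact ⟨p * q, fun t => by simp [hp, hq]⟩

lemma PolyFun.sum {ι : Type*} (s : Finset ι) (f : ι → ℂ → ℂ)
    (h : ∀ i ∈ s, PolyFun (f i)) : PolyFun (fun t => ∑ i ∈ s, f i t) := by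
  classical
  induction s using Finset.cons_induction with
  | empty => exact ⟨0, by simp⟩
  | cons a s ha ih =>
      simp only [Finset.sum_cons]
      exact (h a (Finset.mem_cons_self a s)).add
        (ih fun i hi => h i (Finset.mem_cons_of_mem hi))

lemma PolyFun.shiftB (z c : ℂ) (n : ℕ) : PolyFun (fun t => Bpoly z (c + t) n) := by
  refine ⟨Polynomial.C ((n.factorial : ℂ)⁻¹) *
    ∏ i ∈ Finset.range n, (Polynomial.X + Polynomial.C (c + (n : ℂ) * z - (i : ℂ))), fun t => ?_⟩
  simp only [Bpoly, gchoose, Polynomial.eval_mul, Polynomial.eval_C, Polynomial.eval_prod,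
    Polynomial.eval_add, Polynomial.eval_X, div_eq_mul_inv]
  rw [mul_comm]
  congr 1
  exact Finset.prod_congr rfl (fun i _ => by ring)

lemma PolyFun.B (z : ℂ) (n : ℕ) : PolyFun (fun t => Bpoly z t n) := by
  simpa using PolyFun.shiftB z 0 n

/-- A polynomial function satisfying `f (t-1) = f t` and `f 0 = 0` vanishes. -/
lemma PolyFun.eq_zero {f : ℂ → ℂ} (hf : PolyFun f) (hper : ∀ t, f (t - 1) = f t)
    (h0 : f 0 = 0) : ∀ t, f t = 0 := by
  obtain ⟨p, hp⟩ := hf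
  have hnat : ∀ n : ℕ, f (n : ℂ) = 0 := by
    intro n
    induction n with
    | zero => simpa using h0
    | succ m ihm =>
        have h := hper ((m : ℂ) + 1)
        rw [show ((m : ℂ) + 1) - 1 = (m : ℂ) by ring] at h
        push_cast
        rw [← h]
        exact ihm
  have hp0 : p = 0 := by
    apply Polynomial.eq_zero_of_infinite_isRoot
    apply Set.infinite_of_injective_forall_mem
      (f := fun n : ℕ => (n : ℂ)) Nat.cast_injective
    intro n
    simp only [Set.mem_setOf_eq, Polynomial.IsRoot]
    rw [← hp]
    exact hnat n
  intro t
  rw [hp, hp0, Polynomial.eval_zero]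

/-- The Gould convolution sum. -/
noncomputable def S1 (z x y : ℂ) (k : ℕ) : ℂ :=
  ∑ l ∈ Finset.range (k + 1), Apoly z x l * Bpoly z y (k - l)

lemma S1_zero_left (z y : ℂ) (k : ℕ) : S1 z 0 y k = Bpoly z y k := by
  rw [S1, Finset.sum_eq_single_of_mem 0 (Finset.mem_range.mpr (Nat.succ_pos k))]
  · simp [Apoly_zero']
  · intro l _ hl
    obtain ⟨m, rfl⟩ := Nat.exists_eq_succ_of_ne_zero hl
    rw [Apoly_of_zero, zero_mul]

/-- Splitting using `Bpoly_succ`. -/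
lemma S1_split1 (z x y : ℂ) (k : ℕ) :
    S1 z x y (k + 1) =
      (∑ l ∈ Finset.range (k + 2), Apoly z x l * Apoly z y (k + 1 - l)) +
        z * S1 z x (y + z - 1) k := by
  rw [S1, Finset.sum_range_succ, Finset.sum_range_succ (n := k + 1)]
  have h : ∀ l ∈ Finset.range (k + 1),
      Apoly z x l * Bpoly z y (k + 1 - l)
        = Apoly z x l * Apoly z y (k + 1 - l)
          + z * (Apoly z x l * Bpoly z (y + z - 1) (k - l)) := by
    intro l hl
    have hlk : l ≤ k := Nat.lt_succ_iff.mp (Finset.mem_range.mp hl)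
    have e : k + 1 - l = (k - l) + 1 := by omega
    rw [e, Bpoly_succ]
    ring
  rw [Finset.sum_congr rfl h, Finset.sum_add_distrib, S1, Finset.mul_sum]
  simp only [Nat.sub_self, Nat.add_sub_cancel_left, Bpoly_zero, Apoly_zero']
  ring

/-- Splitting using `Bpoly_pascal`. -/
lemma S1_split2 (z x y : ℂ) (k : ℕ) :
    S1 z x y (k + 1) = S1 z x (y - 1) (k + 1) + S1 z x (y + z - 1) k := by
  rw [S1, S1, Finset.sum_range_succ, Finset.sum_range_succ (n := k + 1)]
  have h : ∀ l ∈ Finset.range (k + 1),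
      Apoly z x l * Bpoly z y (k + 1 - l)
        = Apoly z x l * Bpoly z (y - 1) (k + 1 - l)
          + Apoly z x l * Bpoly z (y + z - 1) (k - l) := by
    intro l hl
    have hlk : l ≤ k := Nat.lt_succ_iff.mp (Finset.mem_range.mp hl)
    have e : k + 1 - l = (k - l) + 1 := by omega
    rw [e, Bpoly_pascal]
    ring
  rw [Finset.sum_congr rfl h, Finset.sum_add_distrib, S1]
  simp only [Nat.sub_self, Bpoly_zero]
  ring

/-- Symmetry of the Rothe convolution. -/
lemma R_symm (z x y : ℂ) (n : ℕ) :
    ∑ l ∈ Finset.range (n + 1), Apoly z x l * Apoly z y (n - l)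
      = ∑ l ∈ Finset.range (n + 1), Apoly z y l * Apoly z x (n - l) := by
  rw [← Finset.sum_range_reflect]
  apply Finset.sum_congr rfl
  intro j hj
  have hjn : j ≤ n := Nat.lt_succ_iff.mp (Finset.mem_range.mp hj)
  have e1 : n + 1 - 1 - j = n - j := by omega
  have e2 : n - (n - j) = j := by omega
  rw [e1, e2, mul_comm]

/-- The Gould identity. -/
lemma Gould (z : ℂ) (k : ℕ) : ∀ x y : ℂ, S1 z x y k = Bpoly z (x + y) k := by
  induction k with
  | zero =>
      intro x y
      simp [S1, Apoly_zero', Bpoly_zero]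
  | succ k ih =>
      intro x y
      -- the function of the second argument
      set f : ℂ → ℂ := fun t => S1 z x t (k + 1) - Bpoly z (x + t) (k + 1) with hf
      -- symmetry
      have hsym : ∀ a b : ℂ,
          S1 z a b (k + 1) - Bpoly z (a + b) (k + 1)
            = S1 z b a (k + 1) - Bpoly z (b + a) (k + 1) := by
        intro a b
        rw [S1_split1, S1_split1, ih, ih, Bpoly_succ z (a + b) k, Bpoly_succ z (b + a) k]
        have e1 : a + b + z - 1 = a + (b + z - 1) := by ring
        have e2 : b + a + z - 1 = b + (a + z - 1) := by ring
        rw [← e1, ← e2, show b + a = a + b by ring]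
        linear_combination R_symm z a b (k + 1)
      have hper : ∀ t : ℂ, f (t - 1) = f t := by
        intro t
        simp only [hf]
        rw [S1_split2 z x t k, ih, Bpoly_pascal z (x + t) k]
        have e1 : x + t + z - 1 = x + (t + z - 1) := by ring
        have e2 : x + (t - 1) = x + t - 1 := by ring
        rw [e2, ← e1]
        ring
      have h0 : f 0 = 0 := by
        simp only [hf]
        rw [hsym x 0, S1_zero_left, zero_add, sub_self]
      have hpf : PolyFun f := by
        apply PolyFun.sub
        · apply PolyFun.sum
          intro l _
          exact (PolyFun.const (Apoly z x l)).mul (PolyFun.B z (k + 1 - l))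
        · exact PolyFun.shiftB z x (k + 1)
      have := hpf.eq_zero hper h0 y
      simpa only [hf, sub_eq_zero] using this

/-- The Rothe identity in polynomial form. -/
lemma Rothe (z : ℂ) (k : ℕ) (x y : ℂ) :
    ∑ l ∈ Finset.range (k + 1), Apoly z x l * Apoly z y (k - l)
      = Apoly z (x + y) k := by
  cases k with
  | zero => simp [Apoly_zero']
  | succ k =>
      have h1 := S1_split1 z x y k
      rw [Gould z (k + 1) x y, Gould z k x (y + z - 1)] at h1
      rw [Bpoly_succ z (x + y) k] at h1
      have e1 : x + (y + z - 1) = x + y + z - 1 := by ring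
      rw [e1] at h1
      linear_combination -h1

lemma Apoly_eq (z x : ℂ) (l : ℕ) (h : x + (l : ℂ) * z ≠ 0) :
    x / (x + (l : ℂ) * z) * gchoose (x + (l : ℂ) * z) l = Apoly z x l := by
  cases l with
  | zero =>
      simp only [Nat.cast_zero, zero_mul, add_zero] at h ⊢
      rw [gchoose_zero, mul_one, div_self h, Apoly_zero']
  | succ n =>
      have hQ : (∏ i ∈ Finset.range (n + 1), (x + (((n : ℕ) + 1 : ℕ) : ℂ) * z - (i : ℂ)))
          = (∏ i ∈ Finset.range n, (x + ((n : ℂ) + 1) * z - ((i : ℂ) + 1))) *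
            (x + ((n : ℂ) + 1) * z) := by
        rw [Finset.prod_range_succ',
          show (∏ i ∈ Finset.range n, (x + (((n : ℕ) + 1 : ℕ) : ℂ) * z - ((i + 1 : ℕ) : ℂ)))
            = ∏ i ∈ Finset.range n, (x + ((n : ℂ) + 1) * z - ((i : ℂ) + 1)) from
            Finset.prod_congr rfl (fun i _ => by push_cast; ring)]
        push_cast
        ring
      have h' : x + ((n : ℂ) + 1) * z ≠ 0 := by push_cast at h; exact h
      have hfac := factorial_cast_ne (n + 1)
      simp only [gchoose, Apoly]
      rw [hQ]
      push_cast at h ⊢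
      field_simp

theorem stmt6 (k : ℕ) (x y z : ℂ)
    (hx : ∀ l : ℕ, l ≤ k → x + l * z ≠ 0)
    (hy : ∀ l : ℕ, l ≤ k → y + l * z ≠ 0)
    (hxy : x + y + k * z ≠ 0) :
    ∑ l ∈ Finset.range (k + 1),
      (x / (x + l * z)) * gchoose (x + l * z) l *
        (y / (y + ((k - l : ℕ) : ℂ) * z)) * gchoose (y + ((k - l : ℕ) : ℂ) * z) (k - l)
      = ((x + y) / (x + y + k * z)) * gchoose (x + y + k * z) k := by
  have hconv : ∀ l ∈ Finset.range (k + 1),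
      (x / (x + l * z)) * gchoose (x + l * z) l *
        (y / (y + ((k - l : ℕ) : ℂ) * z)) * gchoose (y + ((k - l : ℕ) : ℂ) * z) (k - l)
        = Apoly z x l * Apoly z y (k - l) := by
    intro l hl
    have hl' : l ≤ k := Nat.lt_succ_iff.mp (Finset.mem_range.mp hl)
    have h1 := Apoly_eq z x l (hx l hl')
    have h2 := Apoly_eq z y (k - l) (hy (k - l) (Nat.sub_le k l))
    calc (x / (x + l * z)) * gchoose (x + l * z) l *
        (y / (y + ((k - l : ℕ) : ℂ) * z)) * gchoose (y + ((k - l : ℕ) : ℂ) * z) (k - l)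
        = ((x / (x + l * z)) * gchoose (x + l * z) l) *
          ((y / (y + ((k - l : ℕ) : ℂ) * z)) * gchoose (y + ((k - l : ℕ) : ℂ) * z) (k - l)) := by
          ring
      _ = Apoly z x l * Apoly z y (k - l) := by rw [h1, h2]
  rw [Finset.sum_congr rfl hconv, Rothe z k x y]
  exact (Apoly_eq z (x + y) k hxy).symm
end

section
/- Cvijović's convolution identity: for integers 0 < r <= k <= n and any sequence x: C(k,r) * B_{n,k}(x) equals the sum over m from k-r to n-r of C(n,m) * B_{m,k-r}(x) * B_{n-m,r}(x). -/
open Finset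

/-- The partial Bell polynomial `B_{n,k}(x₁, x₂, …)` evaluated at the sequence `x`. -/
noncomputable def Bell (n k : ℕ) (x : ℕ → ℂ) : ℂ :=
  ∑ i ∈ parts n n k,
    ((n.factorial : ℂ) / ∏ j, ((i j).factorial : ℂ)) *
      ∏ j : Fin n, (x ((j : ℕ) + 1) / (((j : ℕ) + 1).factorial : ℂ)) ^ (i j)

lemma mem_parts' {d n k : ℕ} {i : Fin d → ℕ} :
    i ∈ parts d n k ↔ (∑ j, i j) = k ∧ (∑ j : Fin d, ((j : ℕ) + 1) * i j) = n := by
  simp only [parts, mem_filter, and_iff_right_iff_imp, Fintype.mem_piFinset, mem_range,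
    Nat.lt_succ_iff]
  rintro ⟨h1, h2⟩ j
  calc i j ≤ ((j : ℕ) + 1) * i j := by nlinarith
    _ ≤ n := h2 ▸ Finset.single_le_sum (f := fun j : Fin d => ((j : ℕ) + 1) * i j)
        (fun _ _ => Nat.zero_le _) (mem_univ j)

lemma entry_le {d n : ℕ} {i : Fin d → ℕ} (h : (∑ j : Fin d, ((j : ℕ) + 1) * i j) = n)
    (j : Fin d) : ((j : ℕ) + 1) * i j ≤ n :=
  h ▸ Finset.single_le_sum (f := fun j : Fin d => ((j : ℕ) + 1) * i j)
    (fun _ _ => Nat.zero_le _) (mem_univ j)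

lemma entry_eq_zero {d n : ℕ} {i : Fin d → ℕ} (h : (∑ j : Fin d, ((j : ℕ) + 1) * i j) = n)
    (j : Fin d) (hj : n ≤ (j : ℕ)) : i j = 0 := by
  have := entry_le h j
  by_contra hne
  have : (j : ℕ) + 1 ≤ ((j : ℕ) + 1) * i j := Nat.le_mul_of_pos_right _ (Nat.pos_of_ne_zero hne)
  omega

def pad (m n : ℕ) (i : Fin m → ℕ) : Fin n → ℕ :=
  fun j => if h : (j : ℕ) < m then i ⟨j, h⟩ else 0

lemma pad_prod {M : Type*} [CommMonoid M] {m n : ℕ} (h : m ≤ n) (i : Fin m → ℕ)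
    (F : ℕ → ℕ → M) (hF : ∀ j, F j 0 = 1) :
    ∏ j : Fin n, F (j : ℕ) (pad m n i j) = ∏ j : Fin m, F (j : ℕ) (i j) := by
  set G : ℕ → M := fun j => if hj : j < m then F j (i ⟨j, hj⟩) else 1 with hG
  have h1 : ∏ j : Fin n, F (j : ℕ) (pad m n i j) = ∏ j : Fin n, G (j : ℕ) := by
    apply Finset.prod_congr rfl
    intro j _
    by_cases hj : (j : ℕ) < m <;> simp [pad, G, hj, hF]
  have h2 : ∏ j : Fin m, F (j : ℕ) (i j) = ∏ j : Fin m, G (j : ℕ) := by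
    apply Finset.prod_congr rfl
    intro j _
    simp [G, j.2]
  rw [h1, h2, Fin.prod_univ_eq_prod_range, Fin.prod_univ_eq_prod_range]
  symm
  apply Finset.prod_subset (Finset.range_subset_range.2 h)
  intro j _ hj
  simp only [mem_range, not_lt] at hj
  simp [G, Nat.not_lt.2 hj]

lemma pad_sum {M : Type*} [AddCommMonoid M] {m n : ℕ} (h : m ≤ n) (i : Fin m → ℕ)
    (F : ℕ → ℕ → M) (hF : ∀ j, F j 0 = 0) :
    ∑ j : Fin n, F (j : ℕ) (pad m n i j) = ∑ j : Fin m, F (j : ℕ) (i j) :=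
  pad_prod (M := Multiplicative M) h i F hF


lemma bell_eq (m n k : ℕ) (h : m ≤ n) (x : ℕ → ℂ) :
    Bell m k x = ∑ i ∈ parts n m k,
      ((m.factorial : ℂ) / ∏ j, ((i j).factorial : ℂ)) *
        ∏ j : Fin n, (x ((j : ℕ) + 1) / (((j : ℕ) + 1).factorial : ℂ)) ^ (i j) := by
  unfold Bell
  apply Finset.sum_nbij' (pad m n) (fun i => fun j : Fin m => i (Fin.castLE h j))
  · intro i hi
    rw [mem_parts'] at hi ⊢
    constructor
    · rw [pad_sum h i (fun _ c => c) (fun _ => rfl)]; exact hi.1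
    · rw [pad_sum h i (fun j c => (j + 1) * c) (fun _ => by ring)]; exact hi.2
  · intro i hi
    rw [mem_parts'] at hi ⊢
    have hz : ∀ j : Fin n, m ≤ (j : ℕ) → i j = 0 := entry_eq_zero hi.2
    have hpad : pad m n (fun j : Fin m => i (Fin.castLE h j)) = i := by
      funext j
      by_cases hj : (j : ℕ) < m
      · simp only [pad, dif_pos hj]; congr 1
      · simp only [pad, dif_neg hj]; exact (hz j (le_of_not_gt hj)).symm
    have e1 := pad_sum h (fun j : Fin m => i (Fin.castLE h j)) (fun _ c => c) (fun _ => rfl)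
    have e2 := pad_sum h (fun j : Fin m => i (Fin.castLE h j))
      (fun j c => (j + 1) * c) (fun _ => by ring)
    rw [hpad] at e1 e2
    exact ⟨e1 ▸ hi.1, e2 ▸ hi.2⟩
  · intro i hi
    funext j
    simp only [pad, Fin.coe_castLE, dif_pos j.2, Fin.eta]
  · intro i hi
    rw [mem_parts'] at hi
    have hz : ∀ j : Fin n, m ≤ (j : ℕ) → i j = 0 := entry_eq_zero hi.2
    funext j
    by_cases hj : (j : ℕ) < m
    · simp only [pad, dif_pos hj]; congr 1
    · simp only [pad, dif_neg hj]; exact (hz j (le_of_not_gt hj)).symm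
  · intro i hi
    rw [pad_prod h i (fun _ c => ((Nat.factorial c : ℕ) : ℂ)) (fun _ => by simp),
      pad_prod h i (fun j c => (x (j + 1) / ((Nat.factorial (j + 1) : ℕ) : ℂ)) ^ c)
        (fun _ => by simp)]


lemma vand_t : ∀ (d : ℕ) (t : ℕ) (i : Fin d → ℕ),
    ∑ a ∈ (Fintype.piFinset fun _ : Fin d => range (t + 1)).filter
        (fun a => (∑ j, a j) = t),
      ∏ j, (i j).choose (a j) = (∑ j, i j).choose t := by
  intro d
  induction d with
  | zero =>
    intro t i
    simp only [Finset.sum_empty, Fin.sum_univ_zero, Finset.prod_empty]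
    rcases t with _ | t
    · rw [Nat.choose_self]
      rw [Finset.sum_eq_card_nsmul (b := 1) (by simp)]
      simp only [smul_eq_mul, mul_one]
      rw [Finset.card_eq_one]
      refine ⟨fun _ => 0, ?_⟩
      ext a
      simp only [Finset.mem_filter, Fintype.mem_piFinset, Finset.mem_singleton]
      constructor
      · intro _; funext j; exact absurd j.2 (Nat.not_lt_zero _)
      · intro h; subst h; simp
    · rw [Nat.choose_eq_zero_of_lt (by omega)]
      apply Finset.sum_eq_zero
      intro a ha
      simp at ha
  | succ d ih =>
    intro t i
    rw [Fin.sum_univ_succ]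
    rw [Nat.add_choose_eq]
    rw [Finset.Nat.sum_antidiagonal_eq_sum_range_succ_mk]
    have : ∀ c ∈ range (t + 1), (i 0).choose c * (∑ j : Fin d, i j.succ).choose (t - c)
        = ∑ a ∈ (Fintype.piFinset fun _ : Fin d => range (t - c + 1)).filter
            (fun a => (∑ j, a j) = t - c),
          (i 0).choose c * ∏ j, (i j.succ).choose (a j) := by
      intro c _
      rw [← Finset.mul_sum, ih (t - c) (fun j => i j.succ)]
    rw [Finset.sum_congr rfl this, Finset.sum_sigma']
    apply Finset.sum_nbij' (fun a : Fin (d+1) → ℕ => (⟨a 0, Fin.tail a⟩ : Σ _ : ℕ, Fin d → ℕ))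
      (fun p => Fin.cons p.1 p.2)
    · intro a ha
      simp only [Finset.mem_filter, Fintype.mem_piFinset, Finset.mem_range,
        Nat.lt_succ_iff] at ha
      obtain ⟨hbox, hsum⟩ := ha
      rw [Fin.sum_univ_succ] at hsum
      simp only [Finset.mem_sigma, Finset.mem_filter, Fintype.mem_piFinset, Finset.mem_range,
        Nat.lt_succ_iff]
      have htl : ∑ j' : Fin d, Fin.tail a j' = ∑ j' : Fin d, a j'.succ := rfl
      refine ⟨by omega, fun j => ?_, by rw [htl]; omega⟩
      have h1 : Fin.tail a j ≤ ∑ j', Fin.tail a j' :=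
        Finset.single_le_sum (f := Fin.tail a) (fun _ _ => Nat.zero_le _) (mem_univ j)
      omega
    · intro p hp
      simp only [Finset.mem_sigma, Finset.mem_filter, Fintype.mem_piFinset, Finset.mem_range,
        Nat.lt_succ_iff] at hp
      obtain ⟨hc, hbox, hsum⟩ := hp
      simp only [Finset.mem_filter, Fintype.mem_piFinset, Finset.mem_range, Nat.lt_succ_iff]
      constructor
      · intro j
        induction j using Fin.cases with
        | zero => simpa using hc
        | succ j => have := hbox j; simp only [Fin.cons_succ]; omega
      · rw [Fin.sum_univ_succ]
        simp only [Fin.cons_zero, Fin.cons_succ]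
        omega
    · intro a _; exact Fin.cons_self_tail a
    · intro p _
      simp only [Fin.cons_zero, Fin.tail_cons]
    · intro a _
      rw [Fin.prod_univ_succ]
      rfl

lemma vand (d t : ℕ) (i : Fin d → ℕ) :
    ∑ a ∈ (Fintype.piFinset fun j : Fin d => range (i j + 1)).filter
        (fun a => (∑ j, a j) = t),
      ∏ j, (i j).choose (a j) = (∑ j, i j).choose t := by
  rw [← vand_t d t i]
  apply Finset.sum_subset
  · intro a ha
    simp only [Finset.mem_filter, Fintype.mem_piFinset, Finset.mem_range, Nat.lt_succ_iff] at *
    refine ⟨fun j => ?_, ha.2⟩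
    have : a j ≤ ∑ j', a j' :=
      Finset.single_le_sum (f := a) (fun _ _ => Nat.zero_le _) (mem_univ j)
    omega
  · intro a ha hna
    simp only [Finset.mem_filter, Fintype.mem_piFinset, Finset.mem_range, Nat.lt_succ_iff] at ha hna
    obtain ⟨j, hj⟩ : ∃ j, i j < a j := by
      by_contra hcon
      push_neg at hcon
      exact hna ⟨fun j => by have := hcon j; omega, ha.2⟩
    exact Finset.prod_eq_zero (mem_univ j) (Nat.choose_eq_zero_of_lt hj)

def TT (n kr r : ℕ) : Finset ((Fin n → ℕ) × (Fin n → ℕ)) :=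
  ((Fintype.piFinset fun _ : Fin n => range (n + 1)) ×ˢ
      (Fintype.piFinset fun _ : Fin n => range (n + 1))).filter
    (fun p => (∑ j, p.1 j) = kr ∧ (∑ j, p.2 j) = r ∧
      (∑ j : Fin n, ((j : ℕ) + 1) * p.1 j) + (∑ j : Fin n, ((j : ℕ) + 1) * p.2 j) = n)

lemma le_wt {d : ℕ} (f : Fin d → ℕ) (j : Fin d) :
    f j ≤ ∑ j' : Fin d, ((j' : ℕ) + 1) * f j' :=
  le_trans (Nat.le_mul_of_pos_left _ (Nat.succ_pos _))
    (Finset.single_le_sum (f := fun j' : Fin d => ((j' : ℕ) + 1) * f j')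
      (fun _ _ => Nat.zero_le _) (mem_univ j))

lemma sum_le_wt {d : ℕ} (f : Fin d → ℕ) :
    (∑ j, f j) ≤ ∑ j : Fin d, ((j : ℕ) + 1) * f j :=
  Finset.sum_le_sum fun j _ => Nat.le_mul_of_pos_left _ (Nat.succ_pos _)

lemma mem_TT {n kr r : ℕ} {p : (Fin n → ℕ) × (Fin n → ℕ)} :
    p ∈ TT n kr r ↔ (∑ j, p.1 j) = kr ∧ (∑ j, p.2 j) = r ∧
      (∑ j : Fin n, ((j : ℕ) + 1) * p.1 j) + (∑ j : Fin n, ((j : ℕ) + 1) * p.2 j) = n := by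
  simp only [TT, mem_filter, Finset.mem_product, Fintype.mem_piFinset, mem_range,
    Nat.lt_succ_iff, and_iff_right_iff_imp]
  rintro ⟨-, -, h⟩
  exact ⟨fun j => le_trans (le_wt p.1 j) (by omega), fun j => le_trans (le_wt p.2 j) (by omega)⟩

noncomputable def pterm (n : ℕ) (x : ℕ → ℂ) (p : (Fin n → ℕ) × (Fin n → ℕ)) : ℂ :=
  ((n.factorial : ℂ) / ((∏ j, ((p.1 j).factorial : ℂ)) * ∏ j, ((p.2 j).factorial : ℂ))) *
    ∏ j : Fin n, (x ((j : ℕ) + 1) / (((j : ℕ) + 1).factorial : ℂ)) ^ (p.1 j + p.2 j)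

lemma prod_fact_ne_zero {d : ℕ} (f : Fin d → ℕ) :
    (∏ j, ((f j).factorial : ℂ)) ≠ 0 :=
  Finset.prod_ne_zero_iff.2 fun j _ => Nat.cast_ne_zero.2 (Nat.factorial_ne_zero _)

set_option maxHeartbeats 1000000 in
lemma lemR (r k n : ℕ) (hr : 0 < r) (hrk : r ≤ k) (hkn : k ≤ n) (x : ℕ → ℂ) :
    ∑ m ∈ Finset.Icc (k - r) (n - r), (n.choose m : ℂ) * Bell m (k - r) x * Bell (n - m) r x
      = ∑ p ∈ TT n (k - r) r, pterm n x p := by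
  have hmap : ∀ p ∈ TT n (k - r) r,
      (∑ j : Fin n, ((j : ℕ) + 1) * p.1 j) ∈ Finset.Icc (k - r) (n - r) := by
    intro p hp
    rw [mem_TT] at hp
    obtain ⟨h1, h2, h3⟩ := hp
    have l1 := sum_le_wt p.1
    have l2 := sum_le_wt p.2
    simp only [Finset.mem_Icc]
    omega
  rw [← Finset.sum_fiberwise_of_maps_to hmap (pterm n x)]
  apply Finset.sum_congr rfl
  intro m hm
  rw [Finset.mem_Icc] at hm
  have hmn : m ≤ n := le_trans hm.2 (Nat.sub_le _ _)
  have hset : (TT n (k - r) r).filter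
      (fun p => (∑ j : Fin n, ((j : ℕ) + 1) * p.1 j) = m)
      = parts n m (k - r) ×ˢ parts n (n - m) r := by
    ext p
    simp only [mem_filter, mem_TT, Finset.mem_product, mem_parts']
    constructor
    · rintro ⟨⟨h1, h2, h3⟩, h4⟩
      exact ⟨⟨h1, h4⟩, h2, by omega⟩
    · rintro ⟨⟨h1, h4⟩, h2, h5⟩
      exact ⟨⟨h1, h2, by omega⟩, h4⟩
  rw [hset, Finset.sum_product, bell_eq m n (k - r) hmn x,
    bell_eq (n - m) n r (Nat.sub_le _ _) x, mul_assoc, Finset.sum_mul_sum, Finset.mul_sum]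
  apply Finset.sum_congr rfl
  intro a ha
  rw [Finset.mul_sum]
  apply Finset.sum_congr rfl
  intro b hb
  unfold pterm
  have hA := prod_fact_ne_zero a
  have hB := prod_fact_ne_zero b
  have key : ((n.factorial : ℕ) : ℂ)
      = (n.choose m : ℂ) * (m.factorial : ℂ) * ((n - m).factorial : ℂ) := by
    exact_mod_cast congrArg (Nat.cast (R := ℂ))
      (Nat.choose_mul_factorial_mul_factorial hmn).symm
  have hprod : ∏ j : Fin n, (x ((j : ℕ) + 1) / (((j : ℕ) + 1).factorial : ℂ)) ^ (a j + b j)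
      = (∏ j : Fin n, (x ((j : ℕ) + 1) / (((j : ℕ) + 1).factorial : ℂ)) ^ (a j))
        * ∏ j : Fin n, (x ((j : ℕ) + 1) / (((j : ℕ) + 1).factorial : ℂ)) ^ (b j) := by
    rw [← Finset.prod_mul_distrib]
    exact Finset.prod_congr rfl fun j _ => pow_add _ _ _
  rw [hprod, key]
  field_simp

set_option maxHeartbeats 1000000 in
lemma lemL (r k n : ℕ) (hr : 0 < r) (hrk : r ≤ k) (hkn : k ≤ n) (x : ℕ → ℂ) :
    (k.choose r : ℂ) * Bell n k x = ∑ p ∈ TT n (k - r) r, pterm n x p := by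
  have hmap : ∀ p ∈ TT n (k - r) r, p.1 + p.2 ∈ parts n n k := by
    intro p hp
    rw [mem_TT] at hp
    obtain ⟨h1, h2, h3⟩ := hp
    rw [mem_parts']
    constructor
    · have e : ∑ j : Fin n, (p.1 + p.2) j = (∑ j, p.1 j) + ∑ j, p.2 j := by
        rw [← Finset.sum_add_distrib]; rfl
      rw [e]; omega
    · have e : ∑ j : Fin n, ((j : ℕ) + 1) * (p.1 + p.2) j
          = (∑ j : Fin n, ((j : ℕ) + 1) * p.1 j) + ∑ j : Fin n, ((j : ℕ) + 1) * p.2 j := by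
        rw [← Finset.sum_add_distrib]
        exact Finset.sum_congr rfl fun j _ => by simp [Pi.add_apply]; ring
      rw [e]; omega
  calc (k.choose r : ℂ) * Bell n k x
      = ∑ i ∈ parts n n k, (k.choose r : ℂ) *
          (((n.factorial : ℂ) / ∏ j, ((i j).factorial : ℂ)) *
            ∏ j : Fin n, (x ((j : ℕ) + 1) / (((j : ℕ) + 1).factorial : ℂ)) ^ (i j)) := by
        unfold Bell; rw [Finset.mul_sum]
    _ = ∑ i ∈ parts n n k,
          ∑ p ∈ (TT n (k - r) r).filter (fun p => p.1 + p.2 = i), pterm n x p := by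
        apply Finset.sum_congr rfl
        intro i hi
        rw [mem_parts'] at hi
        obtain ⟨hik, hin⟩ := hi
        have hfib : ∑ p ∈ (TT n (k - r) r).filter (fun p => p.1 + p.2 = i), pterm n x p
            = ∑ a ∈ (Fintype.piFinset fun j : Fin n => range (i j + 1)).filter
                (fun a => (∑ j, a j) = k - r),
              (∏ j, (((i j).choose (a j) : ℕ) : ℂ)) *
                (((n.factorial : ℂ) / ∏ j, ((i j).factorial : ℂ)) *
                  ∏ j : Fin n, (x ((j : ℕ) + 1) / (((j : ℕ) + 1).factorial : ℂ)) ^ (i j)) := by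
          apply Finset.sum_nbij' (fun p => p.1) (fun a => (a, fun j => i j - a j))
          · intro p hp
            simp only [Finset.mem_filter, mem_TT] at hp
            obtain ⟨⟨h1, h2, h3⟩, hsum⟩ := hp
            simp only [Finset.mem_filter, Fintype.mem_piFinset, Finset.mem_range,
              Nat.lt_succ_iff]
            refine ⟨fun j => ?_, h1⟩
            have := congrFun hsum j
            simp only [Pi.add_apply] at this
            omega
          · intro a ha
            simp only [Finset.mem_filter, Fintype.mem_piFinset, Finset.mem_range,
              Nat.lt_succ_iff] at ha
            obtain ⟨hbox, hsum⟩ := ha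
            simp only [Finset.mem_filter, mem_TT]
            have e1 : (∑ j, a j) + (∑ j : Fin n, (i j - a j)) = ∑ j, i j := by
              rw [← Finset.sum_add_distrib]
              exact Finset.sum_congr rfl fun j _ => by have := hbox j; omega
            have e2 : (∑ j : Fin n, ((j : ℕ) + 1) * a j)
                + (∑ j : Fin n, ((j : ℕ) + 1) * (i j - a j))
                = ∑ j : Fin n, ((j : ℕ) + 1) * i j := by
              rw [← Finset.sum_add_distrib]
              apply Finset.sum_congr rfl
              intro j _
              rw [← Nat.mul_add]
              congr 1
              have := hbox j; omega
            refine ⟨⟨hsum, by omega, by omega⟩, ?_⟩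
            funext j
            simp only [Pi.add_apply]
            have := hbox j; omega
          · intro p hp
            simp only [Finset.mem_filter, mem_TT] at hp
            obtain ⟨⟨h1, h2, h3⟩, hsum⟩ := hp
            ext j
            · rfl
            · simp only
              have := congrFun hsum j
              simp only [Pi.add_apply] at this
              omega
          · intro a _
            rfl
          · intro p hp
            simp only [Finset.mem_filter, mem_TT] at hp
            obtain ⟨⟨h1, h2, h3⟩, hsum⟩ := hp
            have hle : ∀ j, p.1 j ≤ i j := by
              intro j
              have := congrFun hsum j
              simp only [Pi.add_apply] at this
              omega
            have hkey : (∏ j, ((i j).factorial : ℕ))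
                = (∏ j, (i j).choose (p.1 j)) * (∏ j, (p.1 j).factorial)
                  * ∏ j, (p.2 j).factorial := by
              rw [← Finset.prod_mul_distrib, ← Finset.prod_mul_distrib]
              apply Finset.prod_congr rfl
              intro j _
              have hij := congrFun hsum j
              simp only [Pi.add_apply] at hij
              rw [show p.2 j = i j - p.1 j by omega]
              exact (Nat.choose_mul_factorial_mul_factorial (hle j)).symm
            have hkeyC : (∏ j, ((i j).factorial : ℂ))
                = (∏ j, (((i j).choose (p.1 j) : ℕ) : ℂ)) * (∏ j, ((p.1 j).factorial : ℂ))
                  * ∏ j, ((p.2 j).factorial : ℂ) := by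
              have := congrArg (Nat.cast (R := ℂ)) hkey
              push_cast at this
              exact_mod_cast this
            have hpow : ∏ j : Fin n, (x ((j : ℕ) + 1) / (((j : ℕ) + 1).factorial : ℂ)) ^ (p.1 j + p.2 j)
                = ∏ j : Fin n, (x ((j : ℕ) + 1) / (((j : ℕ) + 1).factorial : ℂ)) ^ (i j) := by
              apply Finset.prod_congr rfl
              intro j _
              have hij := congrFun hsum j
              simp only [Pi.add_apply] at hij
              rw [hij]
            unfold pterm
            rw [hpow]
            have hA := prod_fact_ne_zero p.1
            have hB := prod_fact_ne_zero p.2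
            have hI := prod_fact_ne_zero i
            have hC : (∏ j, (((i j).choose (p.1 j) : ℕ) : ℂ)) ≠ 0 :=
              Finset.prod_ne_zero_iff.2 fun j _ =>
                Nat.cast_ne_zero.2 (Nat.choose_pos (hle j)).ne'
            have hE : (∏ j : Fin n, ((((j : ℕ) + 1).factorial : ℂ)) ^ (i j)) ≠ 0 :=
              Finset.prod_ne_zero_iff.2 fun j _ =>
                pow_ne_zero _ (Nat.cast_ne_zero.2 (Nat.factorial_ne_zero _))
            rw [hkeyC]
            field_simp
        rw [hfib, ← Finset.sum_mul]
        have hvand : (∑ a ∈ (Fintype.piFinset fun j : Fin n => range (i j + 1)).filter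
              (fun a => (∑ j, a j) = k - r),
            ∏ j, (((i j).choose (a j) : ℕ) : ℂ)) = ((k.choose (k - r) : ℕ) : ℂ) := by
          have hv := vand n (k - r) i
          rw [hik] at hv
          exact_mod_cast congrArg (Nat.cast (R := ℂ)) hv
        rw [hvand, Nat.choose_symm hrk]
    _ = ∑ p ∈ TT n (k - r) r, pterm n x p :=
        Finset.sum_fiberwise_of_maps_to hmap (pterm n x)

theorem stmt13 (r k n : ℕ) (hr : 0 < r) (hrk : r ≤ k) (hkn : k ≤ n) (x : ℕ → ℂ) :
    (k.choose r : ℂ) * Bell n k x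
      = ∑ m ∈ Finset.Icc (k - r) (n - r), (n.choose m : ℂ) * Bell m (k - r) x * Bell (n - m) r x :=
  (lemL r k n hr hrk hkn x).trans (lemR r k n hr hrk hkn x).symm
end
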